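/- arXiv:2306.09168 — 2 statements merged into one kernel-verified Lean document; each statement's English description precedes it below -/
import Mathlib

section
/- Let σ: [0,∞) → [0,∞) be a C¹ function with σ(0) = σ'(0) = 0 and σ' concave. Then for all p₁, p₂ ≥ 0 we have p₁·σ'(p₂) ≤ σ(p₁) + σ(p₂). -/
open MeasureTheory Set

/-- p₁·σ'(p₂) ≤ σ(p₁) + σ(p₂). -/
theorem stmt1 (σ σ' : ℝ → ℝ)
    (hderiv : ∀ p ∈ Set.Ici (0:ℝ), HasDerivAt σ (σ' p) p)
    (hcont : ContinuousOn σ' (Set.Ici 0))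
    (hnn : ∀ p ∈ Set.Ici (0:ℝ), 0 ≤ σ p)
    (hσ0 : σ 0 = 0) (hσ'0 : σ' 0 = 0)
    (hconc : ConcaveOn ℝ (Set.Ici 0) σ') :
    ∀ p₁ ∈ Set.Ici (0:ℝ), ∀ p₂ ∈ Set.Ici (0:ℝ), p₁ * σ' p₂ ≤ σ p₁ + σ p₂ := by
  -- chord inequality: for 0 ≤ t ≤ q, q * σ' t ≥ t * σ' q
  have hchord : ∀ t q : ℝ, 0 ≤ t → t ≤ q → 0 < q → t * σ' q ≤ q * σ' t := by
    intro t q ht htq hq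
    have hmem : (q:ℝ) ∈ Set.Ici (0:ℝ) := le_of_lt hq
    have h0 : (0:ℝ) ∈ Set.Ici (0:ℝ) := Set.self_mem_Ici
    have hb : 0 ≤ 1 - t / q := by
      have : t / q ≤ 1 := (div_le_one hq).2 htq
      linarith
    have ha : 0 ≤ t / q := div_nonneg ht hq.le
    have hsum : t / q + (1 - t / q) = 1 := by ring
    have := hconc.2 hmem h0 ha hb hsum
    simp only [smul_eq_mul, mul_zero, add_zero, hσ'0] at this
    have htt : t / q * q = t := by field_simp
    rw [htt] at this
    have := mul_le_mul_of_nonneg_left this hq.le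
    calc t * σ' q = q * (t / q * σ' q) := by field_simp
      _ ≤ q * σ' t := this
  -- σ' is nonnegative on [0,∞)
  have hσ'nn : ∀ a : ℝ, 0 ≤ a → 0 ≤ σ' a := by
    intro a ha
    rcases eq_or_lt_of_le ha with h0 | h0
    · rw [← h0, hσ'0]
    by_contra hneg
    push_neg at hneg
    set T : ℝ := a + (σ a + 1) / (-σ' a) with hTdef
    have hpos : 0 < (σ a + 1) / (-σ' a) := by
      apply div_pos
      · have := hnn a (le_of_lt h0)
        linarith
      · linarith
    have haT : a < T := by simp [hTdef]; linarith
    obtain ⟨ξ, hξ, hslope⟩ :=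
      exists_hasDerivAt_eq_slope σ σ' haT
        (fun x hx => ((hderiv x (by simp at hx ⊢; linarith [hx.1])).continuousAt).continuousWithinAt)
        (fun x hx => hderiv x (by simp; linarith [hx.1]))
    have hξa : a < ξ := hξ.1
    have hξpos : 0 < ξ := lt_trans h0 hξa
    -- σ' ξ ≤ (ξ/a) σ' a ≤ σ' a
    have hc : a * σ' ξ ≤ ξ * σ' a := hchord a ξ ha hξa.le hξpos
    have hle : σ' ξ ≤ σ' a := by nlinarith
    -- so σ T ≤ σ a + σ' a * (T - a) = -1 < 0
    have hslope' : σ T - σ a = σ' ξ * (T - a) := by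
      rw [hslope, div_mul_cancel₀ _ (sub_ne_zero.2 haT.ne')]
    have hTval : σ' a * (T - a) = -(σ a + 1) := by
      have h : T - a = (σ a + 1) / (-σ' a) := by simp [hTdef]
      have hne : σ' a ≠ 0 := ne_of_lt hneg
      rw [h, mul_div_assoc', div_eq_iff (neg_ne_zero.mpr hne)]; ring
    have hσT : 0 ≤ σ T := hnn T (by simp at *; nlinarith)
    nlinarith [mul_le_mul_of_nonneg_right hle (by linarith : (0:ℝ) ≤ T - a)]
  -- σ' is monotone-ish: 0 ≤ p ≤ t → σ' p ≤ σ' t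
  have hmono : ∀ p t : ℝ, 0 ≤ p → p ≤ t → σ' p ≤ σ' t := by
    intro p t hp hpt
    rcases eq_or_lt_of_le hpt with rfl | hlt
    · exact le_refl _
    refine le_of_forall_pos_le_add fun ε hε => ?_
    rcases le_or_gt (σ' p) ε with h | h
    · have := hσ'nn t (le_trans hp hpt)
      linarith
    · have hσp : 0 < σ' p := lt_trans hε h
      set lam : ℝ := ε / σ' p with hlam
      have hlam0 : 0 < lam := div_pos hε hσp
      have hlam1 : lam < 1 := (div_lt_one hσp).2 h
      set s : ℝ := p + (t - p) / lam with hs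
      have hsp : p < s := by
        have : 0 < (t - p) / lam := div_pos (by linarith) hlam0
        simp [hs]; linarith
      have hsmem : s ∈ Set.Ici (0:ℝ) := by simp at *; linarith
      have hteq : (1 - lam) * p + lam * s = t := by
        simp only [hs]; field_simp; ring
      have := hconc.2 (by exact hp : p ∈ Set.Ici (0:ℝ)) hsmem
        (by linarith : (0:ℝ) ≤ 1 - lam) hlam0.le (by ring)
      simp only [smul_eq_mul, hteq] at this
      have hσs : 0 ≤ σ' s := hσ'nn s hsmem
      have : (1 - lam) * σ' p ≤ σ' t := by nlinarith
      have hlv : lam * σ' p = ε := by rw [hlam, div_mul_cancel₀ _ hσp.ne']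
      nlinarith
  -- key quadratic bound: for 0 ≤ t ≤ q, 0 < q : t^2 * σ' q ≤ 2 * q * σ t
  have hquad : ∀ t q : ℝ, 0 ≤ t → t ≤ q → 0 < q → t ^ 2 * σ' q ≤ 2 * q * σ t := by
    intro t q ht htq hq
    set g : ℝ → ℝ := fun x => 2 * q * σ x - σ' q * x ^ 2 with hg
    have hgd : ∀ x : ℝ, 0 ≤ x → HasDerivAt g (2 * q * σ' x - σ' q * (2 * x)) x := by
      intro x hx
      have h1 := (hderiv x hx).const_mul (2 * q)
      have h2 := (hasDerivAt_pow 2 x).const_mul (σ' q)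
      simpa [hg, pow_one, Pi.sub_def] using h1.sub h2
    have hmonog : MonotoneOn g (Set.Icc 0 q) := by
      apply monotoneOn_of_deriv_nonneg (convex_Icc 0 q)
      · intro x hx
        exact ((hgd x hx.1).continuousAt).continuousWithinAt
      · intro x hx
        rw [interior_Icc] at hx
        exact ((hgd x hx.1.le).differentiableAt).differentiableWithinAt
      · intro x hx
        rw [interior_Icc] at hx
        rw [(hgd x hx.1.le).deriv]
        have := hchord x q hx.1.le hx.2.le hq
        nlinarith
    have h0m : (0:ℝ) ∈ Set.Icc 0 q := by constructor <;> linarith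
    have htm : t ∈ Set.Icc 0 q := ⟨ht, htq⟩
    have := hmonog h0m htm ht
    simp only [hg, hσ0] at this
    nlinarith
  -- main proof
  intro p₁ hp₁ p₂ hp₂
  simp only [Set.mem_Ici] at hp₁ hp₂
  rcases eq_or_lt_of_le hp₂ with h0 | h0
  · rw [← h0, hσ'0, mul_zero]
    have := hnn p₁ hp₁
    have := hnn p₂ hp₂
    linarith
  have hσ'p₂ : 0 ≤ σ' p₂ := hσ'nn p₂ hp₂
  have h2 : p₂ ^ 2 * σ' p₂ ≤ 2 * p₂ * σ p₂ := hquad p₂ p₂ hp₂ (le_refl _) h0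
  rcases le_or_gt p₁ p₂ with hle | hlt
  · have h1 : p₁ ^ 2 * σ' p₂ ≤ 2 * p₂ * σ p₁ := hquad p₁ p₂ hp₁ hle h0
    nlinarith [mul_nonneg hσ'p₂ (sq_nonneg (p₁ - p₂))]
  · -- tangent line via MVT
    obtain ⟨ξ, hξ, hslope⟩ :=
      exists_hasDerivAt_eq_slope σ σ' hlt
        (fun x hx => ((hderiv x (by exact le_trans hp₂ hx.1)).continuousAt).continuousWithinAt)
        (fun x hx => hderiv x (le_of_lt (lt_of_le_of_lt hp₂ hx.1)))
    have hξ2 : σ' p₂ ≤ σ' ξ := hmono p₂ ξ hp₂ hξ.1.le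
    have hslope' : σ p₁ - σ p₂ = σ' ξ * (p₁ - p₂) := by
      rw [hslope, div_mul_cancel₀ _ (sub_ne_zero.2 hlt.ne')]
    nlinarith [mul_le_mul_of_nonneg_right hξ2 (by linarith : (0:ℝ) ≤ p₁ - p₂)]
end

section
/- Let σ: [0,∞) → [0,∞) be a C¹ function with σ(0) = σ'(0) = 0 and σ' concave. Then for all p₁, p₂ > 0, 0 ≤ σ(p₁+p₂) − σ(p₁) − σ(p₂) ≤ 2·(p₁·σ(p₂) + p₂·σ(p₁))/(p₁+p₂). -/
open MeasureTheory Set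

/-- 0 ≤ σ(p₁+p₂) − σ(p₁) − σ(p₂) ≤ 2(p₁σ(p₂)+p₂σ(p₁))/(p₁+p₂). -/
theorem stmt2 (σ σ' : ℝ → ℝ)
    (hderiv : ∀ p ∈ Set.Ici (0:ℝ), HasDerivAt σ (σ' p) p)
    (hcont : ContinuousOn σ' (Set.Ici 0))
    (hnn : ∀ p ∈ Set.Ici (0:ℝ), 0 ≤ σ p)
    (hσ0 : σ 0 = 0) (hσ'0 : σ' 0 = 0)
    (hconc : ConcaveOn ℝ (Set.Ici 0) σ') :
    ∀ p₁ ∈ Set.Ioi (0:ℝ), ∀ p₂ ∈ Set.Ioi (0:ℝ),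
      0 ≤ σ (p₁ + p₂) - σ p₁ - σ p₂ ∧
      σ (p₁ + p₂) - σ p₁ - σ p₂ ≤ 2 * (p₁ * σ p₂ + p₂ * σ p₁) / (p₁ + p₂) := by
  -- chord lemma: for 0 ≤ s ≤ t, (s/t) * σ' t ≤ σ' s
  have chord : ∀ s t : ℝ, 0 ≤ s → s ≤ t → s / t * σ' t ≤ σ' s := by
    intro s t hs hst
    rcases eq_or_lt_of_le (hs.trans hst) with ht | ht
    · have hs0 : s = 0 := le_antisymm (hst.trans ht.symm.le) hs
      simp [hs0, hσ'0]
    · have hb0 : 0 ≤ s / t := div_nonneg hs ht.le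
      have hb1 : s / t ≤ 1 := div_le_one_of_le₀ hst ht.le
      have h := hconc.2 (mem_Ici.mpr (le_refl (0:ℝ))) (mem_Ici.mpr ht.le)
        (by linarith : (0:ℝ) ≤ 1 - s / t) hb0 (by ring)
      have hxy : (1 - s / t) • (0:ℝ) + (s / t) • t = s := by
        field_simp
        simp only [smul_eq_mul, mul_zero, zero_add]
        field_simp
      rw [hxy] at h
      simpa [hσ'0, smul_eq_mul] using h
  -- interval integrability of σ'
  have hint : ∀ a b : ℝ, 0 ≤ a → a ≤ b → IntervalIntegrable σ' volume a b := by
    intro a b ha hab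
    refine (hcont.mono ?_).intervalIntegrable
    rw [uIcc_of_le hab]
    exact (Icc_subset_Ici_self).trans (Ici_subset_Ici.mpr ha)
  -- FTC
  have ftc : ∀ a b : ℝ, 0 ≤ a → a ≤ b → σ b - σ a = ∫ t in a..b, σ' t := by
    intro a b ha hab
    refine (intervalIntegral.integral_eq_sub_of_hasDerivAt (fun x hx => ?_)
      (hint a b ha hab)).symm
    rw [uIcc_of_le hab] at hx
    exact hderiv x (mem_Ici.mpr (ha.trans hx.1))
  -- σ' nonneg on [0, ∞)
  have σ'nn : ∀ t : ℝ, 0 ≤ t → 0 ≤ σ' t := by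
    intro t0 ht0
    by_contra hneg
    push_neg at hneg
    have ht0' : 0 < t0 := by
      rcases eq_or_lt_of_le ht0 with h | h
      · exact absurd hneg (by simp [← h, hσ'0])
      · exact h
    -- σ' t ≤ σ' t0 for all t ≥ t0
    have hbd : ∀ t : ℝ, t0 ≤ t → σ' t ≤ σ' t0 := by
      intro t ht
      have h := chord t0 t ht0 ht
      have htpos : 0 < t := lt_of_lt_of_le ht0' ht
      -- (t0/t) * σ' t ≤ σ' t0 < 0 , so σ' t < 0 and σ' t ≤ (t/t0) σ' t0 ≤ σ' t0
      have h1 : σ' t ≤ t / t0 * σ' t0 := by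
        have hm := mul_le_mul_of_nonneg_left h (le_of_lt (div_pos htpos ht0'))
        have he : t / t0 * (t0 / t * σ' t) = σ' t := by
          field_simp
        rw [he] at hm
        exact hm
      have h2 : t / t0 * σ' t0 ≤ σ' t0 := by
        have : (1:ℝ) ≤ t / t0 := (one_le_div ht0').mpr ht
        nlinarith
      linarith
    -- pick T large
    set c : ℝ := -σ' t0 with hc
    have hcpos : 0 < c := by simp [hc]; linarith
    set T : ℝ := t0 + (σ t0 + 1) / c with hT
    have hTt0 : t0 ≤ T := by
      have : 0 < (σ t0 + 1) / c := div_pos (by have := hnn t0 (mem_Ici.mpr ht0); linarith) hcpos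
      rw [hT]; linarith
    have hftc := ftc t0 T ht0 hTt0
    have hintle : (∫ t in t0..T, σ' t) ≤ ∫ _ in t0..T, σ' t0 := by
      apply intervalIntegral.integral_mono_on hTt0 (hint t0 T ht0 hTt0)
        intervalIntegrable_const
      intro x hx
      exact hbd x hx.1
    rw [intervalIntegral.integral_const] at hintle
    have hTval : (T - t0) • σ' t0 = -(σ t0 + 1) := by
      have hσ't0 : σ' t0 = -c := by rw [hc]; ring
      rw [smul_eq_mul, hT, hσ't0]
      have he : t0 + (σ t0 + 1) / c - t0 = (σ t0 + 1) / c := by ring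
      rw [he]
      field_simp
    have : σ T ≤ -1 := by
      have := hnn t0 (mem_Ici.mpr ht0)
      rw [hTval] at hintle
      linarith
    have := hnn T (mem_Ici.mpr (le_trans ht0 hTt0))
    linarith
  -- monotonicity of σ'
  have hmono : ∀ s t : ℝ, 0 ≤ s → s ≤ t → σ' s ≤ σ' t := by
    intro s t hs hst
    rcases eq_or_lt_of_le hst with rfl | hlt
    · exact le_refl _
    rcases le_or_gt (σ' s) 0 with h | h
    · exact h.trans (σ'nn t (hs.trans hst))
    refine le_of_forall_pos_le_add ?_
    intro ε hε
    rcases le_or_gt (σ' s) ε with h' | h'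
    · have := σ'nn t (hs.trans hst); linarith
    set l : ℝ := ε / σ' s with hl
    have hl0 : 0 < l := div_pos hε h
    have hl1 : l ≤ 1 := by
      rw [hl, div_le_one h]; exact h'.le
    set u : ℝ := s + (t - s) / l with hu
    have hus : s < u := by
      have : 0 < (t - s) / l := div_pos (by linarith) hl0
      rw [hu]; linarith
    have hu0 : u ∈ Ici (0:ℝ) := mem_Ici.mpr (hs.trans hus.le)
    have hcc := hconc.2 (mem_Ici.mpr hs) hu0 (by linarith : (0:ℝ) ≤ 1 - l) hl0.le
      (by ring : (1 - l) + l = 1)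
    have hxy : (1 - l) • s + l • u = t := by
      rw [hu]; field_simp; linear_combination (t - s + s * l) * (mul_inv_cancel₀ hl0.ne')
    rw [hxy] at hcc
    have hσu : 0 ≤ σ' u := σ'nn u hu0
    have hls : l * σ' s = ε := by
      rw [hl]; field_simp
    simp only [smul_eq_mul] at hcc
    nlinarith
  -- subadditivity of σ'
  have hsub : ∀ s t : ℝ, 0 ≤ s → 0 ≤ t → σ' (s + t) ≤ σ' s + σ' t := by
    intro s t hs ht
    rcases eq_or_lt_of_le (add_nonneg hs ht) with h0 | h0
    · have hs0 : s = 0 := by linarith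
      have ht0 : t = 0 := by linarith
      simp [hs0, ht0, hσ'0]
    have h1 := chord s (s + t) hs (by linarith)
    have h2 := chord t (s + t) ht (by linarith)
    have he : s / (s + t) * σ' (s + t) + t / (s + t) * σ' (s + t) = σ' (s + t) := by
      field_simp
    linarith
  -- p * σ' p ≤ 2 * σ p for p > 0
  have hhalf : ∀ p : ℝ, 0 < p → p * σ' p ≤ 2 * σ p := by
    intro p hp
    have hftc := ftc 0 p (le_refl 0) hp.le
    rw [hσ0, sub_zero] at hftc
    have hlow : (∫ t in (0:ℝ)..p, t * (σ' p / p)) ≤ ∫ t in (0:ℝ)..p, σ' t := by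
      apply intervalIntegral.integral_mono_on hp.le
        ((continuous_id.mul continuous_const).intervalIntegrable 0 p)
        (hint 0 p (le_refl 0) hp.le)
      intro x hx
      have := chord x p hx.1 hx.2
      calc x * (σ' p / p) = x / p * σ' p := by ring
        _ ≤ σ' x := this
    rw [intervalIntegral.integral_mul_const, integral_id] at hlow
    rw [hftc]
    have : (p ^ 2 - 0 ^ 2) / 2 * (σ' p / p) = p * σ' p / 2 := by
      field_simp; ring
    rw [this] at hlow
    linarith
  -- main bounds: for q₁, q₂ > 0, difference identity and bounds
  have key : ∀ q₁ q₂ : ℝ, 0 < q₁ → 0 < q₂ →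
      σ q₂ ≤ σ (q₁ + q₂) - σ q₁ ∧ σ (q₁ + q₂) - σ q₁ ≤ q₂ * σ' q₁ + σ q₂ := by
    intro q₁ q₂ hq₁ hq₂
    have hftc1 := ftc q₁ (q₁ + q₂) hq₁.le (by linarith)
    have hftc2 := ftc 0 q₂ (le_refl 0) hq₂.le
    rw [hσ0, sub_zero] at hftc2
    have hshift : (∫ t in q₁..(q₁ + q₂), σ' t) = ∫ u in (0:ℝ)..q₂, σ' (q₁ + u) := by
      rw [intervalIntegral.integral_comp_add_left σ' q₁, add_zero]
    have hintc : IntervalIntegrable (fun u => σ' (q₁ + u)) volume 0 q₂ := by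
      refine ((hcont.comp (continuous_const.add continuous_id).continuousOn ?_)).intervalIntegrable
      intro x hx
      rw [uIcc_of_le hq₂.le] at hx
      exact mem_Ici.mpr (by simp; linarith [hx.1])
    constructor
    · rw [hftc1, hshift, hftc2]
      apply intervalIntegral.integral_mono_on hq₂.le (hint 0 q₂ (le_refl 0) hq₂.le) hintc
      intro x hx
      exact hmono x (q₁ + x) hx.1 (by linarith)
    · rw [hftc1, hshift]
      have hle : (∫ u in (0:ℝ)..q₂, σ' (q₁ + u)) ≤ ∫ u in (0:ℝ)..q₂, (σ' q₁ + σ' u) := by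
        apply intervalIntegral.integral_mono_on hq₂.le hintc
          (intervalIntegrable_const.add (hint 0 q₂ (le_refl 0) hq₂.le))
        intro x hx
        exact hsub q₁ x hq₁.le hx.1
      rw [intervalIntegral.integral_add intervalIntegrable_const
        (hint 0 q₂ (le_refl 0) hq₂.le), intervalIntegral.integral_const] at hle
      rw [← hftc2] at hle
      simp only [smul_eq_mul, sub_zero] at hle
      linarith
  intro p₁ hp₁ p₂ hp₂
  rw [mem_Ioi] at hp₁ hp₂
  obtain ⟨hlow1, hup1⟩ := key p₁ p₂ hp₁ hp₂
  obtain ⟨hlow2, hup2⟩ := key p₂ p₁ hp₂ hp₁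
  rw [add_comm p₂ p₁] at hlow2 hup2
  have h3 := hhalf p₁ hp₁
  have h4 := hhalf p₂ hp₂
  constructor
  · linarith
  · rw [le_div_iff₀ (by linarith : (0:ℝ) < p₁ + p₂)]
    nlinarith [mul_le_mul_of_nonneg_left hup1 hp₁.le,
        mul_le_mul_of_nonneg_left hup2 hp₂.le,
        mul_le_mul_of_nonneg_left h3 hp₂.le,
        mul_le_mul_of_nonneg_left h4 hp₁.le]
end
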